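/- DKC regularity of the Fermi–Dirac entropy: Let h(t) = t·log t + (1 − t)·log(1 − t) on (0, 1), so h′(t) = log(t/(1 − t)) and h″(t) = 1/(t(1 − t)). For every δ > 0 and all y, z ∈ (0, 1) with |log(z/(1 − z)) − log(y/(1 − y))| ≤ δ, it holds that |log(z(1 − z)) − log(y(1 − y))| ≤ δ, and consequently h″(y)/h″(z) ≤ exp(δ). -/

import Mathlib

/-- **DKC regularity of the Fermi–Dirac entropy**
`h(t) = t log t + (1 - t) log (1 - t)` on `(0, 1)`: `h'(t) = log (t/(1-t))`,
`h''(t) = 1/(t(1-t))`, and for every `δ > 0` and all `y, z ∈ (0, 1)` with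
`|log (z/(1-z)) - log (y/(1-y))| ≤ δ`, one has
`|log (z(1-z)) - log (y(1-y))| ≤ δ`, and consequently `h''(y)/h''(z) ≤ exp δ`. -/
theorem fermi_dirac_entropy_dkc :
    (∀ t : ℝ, 0 < t → t < 1 →
      HasDerivAt (fun s : ℝ => s * Real.log s + (1 - s) * Real.log (1 - s))
        (Real.log (t / (1 - t))) t) ∧
    (∀ t : ℝ, 0 < t → t < 1 →
      HasDerivAt (fun s : ℝ => Real.log (s / (1 - s))) (1 / (t * (1 - t))) t) ∧
    (∀ δ : ℝ, 0 < δ → ∀ y z : ℝ, 0 < y → y < 1 → 0 < z → z < 1 →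
      |Real.log (z / (1 - z)) - Real.log (y / (1 - y))| ≤ δ →
      |Real.log (z * (1 - z)) - Real.log (y * (1 - y))| ≤ δ ∧
      (1 / (y * (1 - y))) / (1 / (z * (1 - z))) ≤ Real.exp δ) := by
  refine ⟨?_, ?_, ?_⟩
  · intro t ht0 ht1
    have h1t : (0:ℝ) < 1 - t := by linarith
    have h1 : HasDerivAt (fun s : ℝ => s * Real.log s) (Real.log t + 1) t :=
      Real.hasDerivAt_mul_log ht0.ne'
    have h2 : HasDerivAt (fun s : ℝ => (1 - s) * Real.log (1 - s))
        (-(Real.log (1 - t) + 1)) t := by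
      have hinner : HasDerivAt (fun s : ℝ => 1 - s) (-1) t := by
        exact (hasDerivAt_id' t).const_sub 1
      have := (Real.hasDerivAt_mul_log h1t.ne').comp t hinner
      simpa [mul_comm, mul_neg, Function.comp_def] using this
    have := h1.add h2
    have heq : Real.log t + 1 + -(Real.log (1 - t) + 1) = Real.log (t / (1 - t)) := by
      rw [Real.log_div ht0.ne' h1t.ne']; ring
    rw [← heq]; exact this
  · intro t ht0 ht1
    have h1t : (0:ℝ) < 1 - t := by linarith
    have hdiv : HasDerivAt (fun s : ℝ => s / (1 - s)) (1 / (1 - t) ^ 2) t := by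
      have h1 : HasDerivAt (fun s : ℝ => s) 1 t := hasDerivAt_id t
      have h2 : HasDerivAt (fun s : ℝ => 1 - s) (-1) t := by
        exact (hasDerivAt_id' t).const_sub 1
      have : HasDerivAt (fun s : ℝ => s / (1 - s)) ((1 * (1 - t) - t * -1) / (1 - t) ^ 2) t :=
        h1.div h2 h1t.ne'
      convert this using 1
      ring
    have hne : t / (1 - t) ≠ 0 := by positivity
    have := hdiv.log hne
    convert this using 1
    field_simp
  · intro δ hδ y z hy0 hy1 hz0 hz1 hδle
    have hy1' : (0:ℝ) < 1 - y := by linarith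
    have hz1' : (0:ℝ) < 1 - z := by linarith
    set a := Real.log z - Real.log y with ha
    set b := Real.log (1 - z) - Real.log (1 - y) with hb
    have hab : a * b ≤ 0 := by
      rcases le_total y z with h | h
      · have h1 : 0 ≤ a := sub_nonneg.2 (Real.log_le_log hy0 h)
        have h2 : b ≤ 0 := sub_nonpos.2 (Real.log_le_log hz1' (by linarith))
        exact mul_nonpos_of_nonneg_of_nonpos h1 h2
      · have h1 : a ≤ 0 := sub_nonpos.2 (Real.log_le_log hz0 h)
        have h2 : 0 ≤ b := sub_nonneg.2 (Real.log_le_log hy1' (by linarith))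
        exact mul_nonpos_of_nonpos_of_nonneg h1 h2
    have hsum : Real.log (z * (1 - z)) - Real.log (y * (1 - y)) = a + b := by
      rw [Real.log_mul hz0.ne' hz1'.ne', Real.log_mul hy0.ne' hy1'.ne']; ring
    have hdiff : Real.log (z / (1 - z)) - Real.log (y / (1 - y)) = a - b := by
      rw [Real.log_div hz0.ne' hz1'.ne', Real.log_div hy0.ne' hy1'.ne']; ring
    have key : |a + b| ≤ |a - b| := by
      rw [← sq_le_sq]
      nlinarith
    have h1 : |Real.log (z * (1 - z)) - Real.log (y * (1 - y))| ≤ δ := by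
      rw [hsum]
      calc |a + b| ≤ |a - b| := key
        _ ≤ δ := by rw [← hdiff]; exact hδle
    refine ⟨h1, ?_⟩
    have hratio : (1 / (y * (1 - y))) / (1 / (z * (1 - z))) =
        Real.exp (Real.log (z * (1 - z)) - Real.log (y * (1 - y))) := by
      rw [Real.exp_sub, Real.exp_log (by positivity), Real.exp_log (by positivity)]
      field_simp
    rw [hratio]
    exact Real.exp_le_exp.2 (le_trans (le_abs_self _) h1)
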